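/- arXiv:2510.06883 — 8 statements merged into one kernel-verified Lean document; each statement's English description precedes it below -/
import Mathlib

section
/- If S is 2-C-normal, then the antilinear operator SC satisfies that (SC)² (a bounded linear operator) is normal, i.e., ((SC)²)* (SC)² = (SC)² ((SC)²)*. -/
open ContinuousLinearMap

variable {H : Type*} [NormedAddCommGroup H] [InnerProductSpace ℂ H] [CompleteSpace H]

/-- A conjugation on `H`: antilinear, involutive, and `⟪Cx, Cy⟫ = ⟪y, x⟫`. -/
def Conjugation (C : H → H) : Prop :=
  (∀ (a : ℂ) (x y : H), C (a • x + y) = (starRingEnd ℂ) a • C x + C y) ∧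
  (∀ x : H, C (C x) = x) ∧
  (∀ x y : H, (inner ℂ (C x) (C y) : ℂ) = inner ℂ y x)

/-- `S` is `C`-normal: `C S* S C = S S*`. -/
def CNormal (C : H → H) (S : H →L[ℂ] H) : Prop :=
  ∀ x : H, C (adjoint S (S (C x))) = S (adjoint S x)

/-- `S` is 2-`C`-normal: `C S S* C S* = S* C S* S C`. -/
def TwoCNormal (C : H → H) (S : H →L[ℂ] H) : Prop :=
  ∀ x : H, C (S (adjoint S (C (adjoint S x)))) =
    adjoint S (C (adjoint S (S (C x))))

theorem stmt3 (C : H → H) (hC : Conjugation C) (S : H →L[ℂ] H)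
    (h : TwoCNormal C S) :
    ∀ x : H, C (adjoint S (C (adjoint S (S (C (S (C x))))))) =
      S (C (S (C (C (adjoint S (C (adjoint S x))))))) := by
  obtain ⟨-, hCC, -⟩ := hC
  intro x
  have h1 : ∀ y, C (adjoint S (C (adjoint S (S (C y))))) =
      S (adjoint S (C (adjoint S y))) := fun y => by rw [← h y, hCC]
  rw [h1 (S (C x)), ← h x, hCC]
end

section
/- If S is invertible and 2-C-normal, then S⁻¹ is 2-C-normal. -/
open ContinuousLinearMap

variable {H : Type*} [NormedAddCommGroup H] [InnerProductSpace ℂ H] [CompleteSpace H]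

theorem stmt6 (C : H → H) (hC : Conjugation C) (S Sinv : H →L[ℂ] H)
    (h1 : S ∘L Sinv = 1) (h2 : Sinv ∘L S = 1)
    (h : TwoCNormal C S) : TwoCNormal C Sinv := by
  obtain ⟨-, hCC, -⟩ := hC
  have hSi : ∀ y, S (Sinv y) = y := fun y => by
    simpa using DFunLike.congr_fun h1 y
  have hSiS : ∀ y, Sinv (S y) = y := fun y => by
    simpa using DFunLike.congr_fun h2 y
  have hAB : ∀ y, adjoint S (adjoint Sinv y) = y := fun y => by
    have : adjoint S ∘L adjoint Sinv = 1 := by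
      rw [← adjoint_comp, h2]; exact adjoint_id
    simpa using DFunLike.congr_fun this y
  have hBA : ∀ y, adjoint Sinv (adjoint S y) = y := fun y => by
    have : adjoint Sinv ∘L adjoint S = 1 := by
      rw [← adjoint_comp, h1]; exact adjoint_id
    simpa using DFunLike.congr_fun this y
  have hG : ∀ y z : H, adjoint S (C (adjoint S (S (C y)))) =
      adjoint S (C (adjoint S (S (C z)))) → y = z := by
    intro y z hyz
    have := congrArg (fun w => C (Sinv (adjoint Sinv (C (adjoint Sinv w))))) hyz
    simpa [hBA, hCC, hSiS] using this
  intro x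
  apply hG
  have e1 : adjoint S (C (adjoint S (S (C (C (Sinv (adjoint Sinv
      (C (adjoint Sinv x))))))))) = x := by
    simp [hCC, hSi, hAB]
  have e2 : C (S (adjoint S (C (adjoint S (adjoint Sinv (C (adjoint Sinv
      (Sinv (C x))))))))) = x := by
    simp [hAB, hCC, hSi]
  rw [e1, ← h, e2]
end

section
/- For every unitary U and every n ∈ ℕ, the operator Uⁿ is 2-C-normal. -/
open ContinuousLinearMap

variable {H : Type*} [NormedAddCommGroup H] [InnerProductSpace ℂ H] [CompleteSpace H]

theorem stmt8 (C : H → H) (hC : Conjugation C) (U : H →L[ℂ] H)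
    (hU1 : adjoint U ∘L U = 1) (hU2 : U ∘L adjoint U = 1) (n : ℕ) :
    TwoCNormal C (U ^ n) := by
  have hUmem : U ∈ unitary (H →L[ℂ] H) := by
    rw [Unitary.mem_iff]
    constructor
    · rw [star_eq_adjoint, mul_def, hU1]
    · rw [star_eq_adjoint, mul_def, hU2]
  have hmem : U ^ n ∈ unitary (H →L[ℂ] H) := pow_mem hUmem n
  rw [Unitary.mem_iff, star_eq_adjoint, mul_def, mul_def] at hmem
  obtain ⟨h1, h2⟩ := hmem
  have hA : ∀ y, (U ^ n) (adjoint (U ^ n) y) = y := fun y => by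
    have := congrFun (congrArg DFunLike.coe h2) y
    simpa using this
  have hB : ∀ y, adjoint (U ^ n) ((U ^ n) y) = y := fun y => by
    have := congrFun (congrArg DFunLike.coe h1) y
    simpa using this
  intro x
  rw [hA, hB, hC.2.1, hC.2.1]
end

section
/- If S is invertible with S* = λ S⁻¹ for some λ ∈ ℂ, then S is 2-C-normal. -/
open ContinuousLinearMap

variable {H : Type*} [NormedAddCommGroup H] [InnerProductSpace ℂ H] [CompleteSpace H]

theorem stmt13 (C : H → H) (hC : Conjugation C) (S Sinv : H →L[ℂ] H)
    (h1 : S ∘L Sinv = 1) (h2 : Sinv ∘L S = 1)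
    (lam : ℂ) (hSa : adjoint S = lam • Sinv) :
    TwoCNormal C S := by
  have hC0 : C 0 = 0 := by
    have h := hC.1 1 0 0
    simp at h
    simpa using h
  have hsmul : ∀ (a : ℂ) (x : H), C (a • x) = (starRingEnd ℂ) a • C x := by
    intro a x
    have h := hC.1 a x 0
    simpa [hC0] using h
  have hSSinv : ∀ y : H, S (Sinv y) = y := fun y => by
    simpa using DFunLike.congr_fun h1 y
  have hSinvS : ∀ y : H, Sinv (S y) = y := fun y => by
    simpa using DFunLike.congr_fun h2 y
  intro x
  rw [hSa]
  simp only [smul_apply, hsmul, map_smul, hSSinv, hSinvS, hC.2.1, smul_smul]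
  rw [map_mul, Complex.conj_conj, mul_comm]
end

section
/- If S is invertible with S* = λ S⁻¹ for some λ ∈ ℂ, then S is C-normal if and only if λ is real. -/
open ContinuousLinearMap

variable {H : Type*} [NormedAddCommGroup H] [InnerProductSpace ℂ H] [CompleteSpace H]

theorem stmt14 (C : H → H) (hC : Conjugation C) (S Sinv : H →L[ℂ] H)
    (h1 : S ∘L Sinv = 1) (h2 : Sinv ∘L S = 1) (hS0 : S ≠ 0)
    (lam : ℂ) (hSa : adjoint S = lam • Sinv) :
    CNormal C S ↔ (starRingEnd ℂ) lam = lam := by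
  obtain ⟨hlin, hinv, _⟩ := hC
  have hC0 : C 0 = 0 := by
    have := hlin 1 0 0
    simpa using this
  have hCsmul : ∀ (a : ℂ) (x : H), C (a • x) = (starRingEnd ℂ) a • C x := by
    intro a x
    have := hlin a x 0
    simpa [hC0] using this
  have hSinvS : ∀ x : H, Sinv (S x) = x := fun x =>
    congrFun (congrArg DFunLike.coe h2) x
  have hSSinv : ∀ x : H, S (Sinv x) = x := fun x =>
    congrFun (congrArg DFunLike.coe h1) x
  have key : ∀ x : H, C (adjoint S (S (C x))) = (starRingEnd ℂ) lam • x := by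
    intro x
    rw [hSa]
    simp only [smul_apply, hSinvS, hCsmul, hinv]
  have key2 : ∀ x : H, S (adjoint S x) = lam • x := by
    intro x
    rw [hSa]
    simp [hSSinv]
  constructor
  · intro hcn
    -- find nonzero x
    obtain ⟨y, hy⟩ : ∃ y : H, S y ≠ 0 := by
      by_contra h
      push_neg at h
      exact hS0 (ContinuousLinearMap.ext fun y => by simpa using h y)
    have hy0 : y ≠ 0 := fun h => hy (by simp [h])
    have := hcn y
    rw [key, key2] at this
    have : ((starRingEnd ℂ) lam - lam) • y = 0 := by
      rw [sub_smul, this, sub_self]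
    rcases smul_eq_zero.mp this with h | h
    · exact sub_eq_zero.mp h
    · exact absurd h hy0
  · intro hl x
    rw [key, key2, hl]
end

section
/- Let S = U|S| be the polar decomposition with U unitary, and suppose U = CJ where C and J are conjugations. Then S is C-normal if and only if J|S|²J = |S|². -/
open ContinuousLinearMap

variable {H : Type*} [NormedAddCommGroup H] [InnerProductSpace ℂ H] [CompleteSpace H]

lemma conj_inner {C : H → H} (hC : Conjugation C) (x y : H) :
    (inner ℂ (C x) y : ℂ) = inner ℂ (C y) x := by
  conv_lhs => rw [← hC.2.1 y]
  exact hC.2.2 x (C y)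

lemma conj_inner_right {C : H → H} (hC : Conjugation C) (y b : H) :
    (inner ℂ y (C b) : ℂ) = inner ℂ b (C y) := by
  rw [← inner_conj_symm, conj_inner hC, inner_conj_symm]

lemma adj_eq {C J : H → H} (hC : Conjugation C) (hJ : Conjugation J)
    (S P : H →L[ℂ] H) (hPsa : IsSelfAdjoint P)
    (hpolar : ∀ x : H, S x = C (J (P x))) (y : H) :
    adjoint S y = P (J (C y)) := by
  apply ext_inner_right ℂ
  intro x
  rw [adjoint_inner_left, hpolar]
  have hP' : (inner ℂ (P (J (C y))) x : ℂ) = inner ℂ (J (C y)) (P x) := by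
    rw [← adjoint_inner_left, hPsa.adjoint_eq]
  rw [hP', conj_inner hJ, ← conj_inner_right hC]

theorem stmt15 (C J : H → H) (hC : Conjugation C) (hJ : Conjugation J)
    (S P : H →L[ℂ] H) (hP : P.IsPositive) (hPsq : P ∘L P = adjoint S ∘L S)
    (hpolar : ∀ x : H, S x = C (J (P x))) :
    CNormal C S ↔ ∀ x : H, J (P (P (J x))) = P (P x) := by
  have hadj := adj_eq hC hJ S P hP.isSelfAdjoint hpolar
  have hCinj : ∀ a b : H, C a = C b → a = b := fun a b h => by
    rw [← hC.2.1 a, h, hC.2.1]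
  constructor
  · intro h x
    have h1 := h (C x)
    simp only [hadj, hpolar, hC.2.1, hJ.2.1] at h1
    exact (hCinj _ _ h1).symm
  · intro h x
    simp only [hadj, hpolar, hC.2.1, hJ.2.1]
    exact congrArg C (h (C x)).symm
end

section
/- Let S = U|S| be the polar decomposition with U unitary, and suppose U = CJ where C and J are conjugations. Then S is 2-C-normal if and only if (J|S|J)² |S| = |S| (J|S|J)². -/
open ContinuousLinearMap

variable {H : Type*} [NormedAddCommGroup H] [InnerProductSpace ℂ H] [CompleteSpace H]

theorem stmt16 (C J : H → H) (hC : Conjugation C) (hJ : Conjugation J)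
    (S P : H →L[ℂ] H) (hP : P.IsPositive) (hPsq : P ∘L P = adjoint S ∘L S)
    (hpolar : ∀ x : H, S x = C (J (P x))) :
    TwoCNormal C S ↔
      ∀ x : H, J (P (J (J (P (J (P x)))))) = P (J (P (J (J (P (J x)))))) := by
  obtain ⟨hCadd, hCinv, hCinner⟩ := hC
  obtain ⟨hJadd, hJinv, hJinner⟩ := hJ
  have hPsa : ∀ a b : H, (inner ℂ a (P b) : ℂ) = inner ℂ (P a) b := by
    intro a b
    exact (hP.1 a b).symm
  have hadj : ∀ y : H, adjoint S y = P (J (C y)) := by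
    intro y
    refine ext_inner_left ℂ fun v => ?_
    rw [adjoint_inner_right, hpolar, hPsa]
    symm
    calc (inner ℂ (P v) (J (C y)) : ℂ)
        = inner ℂ (J (J (P v))) (J (C y)) := by rw [hJinv]
      _ = inner ℂ (C y) (J (P v)) := hJinner _ _
      _ = inner ℂ (C y) (C (C (J (P v)))) := by rw [hCinv]
      _ = inner ℂ (C (J (P v))) y := hCinner _ _
  unfold TwoCNormal
  constructor
  · intro h x
    have := h (C (J x))
    simp only [hadj, hpolar, hCinv, hJinv] at this ⊢
    exact this
  · intro h x
    have := h (J (C x))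
    simp only [hadj, hpolar, hCinv, hJinv] at this ⊢
    exact this
end

section
/- Let S be invertible and suppose S* commutes with C|S*|C, where |S*| = (S S*)^{1/2}. Then S is normal if and only if S is 2-C-normal. -/
open ContinuousLinearMap

variable {H : Type*} [NormedAddCommGroup H] [InnerProductSpace ℂ H] [CompleteSpace H]

theorem stmt17 (C : H → H) (hC : Conjugation C) (S Sinv P : H →L[ℂ] H)
    (h1 : S ∘L Sinv = 1) (h2 : Sinv ∘L S = 1)
    (hP : P.IsPositive) (hPsq : P ∘L P = S ∘L adjoint S)
    (hcomm : ∀ x : H, adjoint S (C (P (C x))) = C (P (C (adjoint S x)))) :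
    adjoint S ∘L S = S ∘L adjoint S ↔ TwoCNormal C S := by
  obtain ⟨-, hCC, -⟩ := hC
  have hPP : ∀ x, P (P x) = S (adjoint S x) := fun x => by
    have := congrArg (fun T : H →L[ℂ] H => T x) hPsq
    simpa using this
  have hSinj : Function.Injective (adjoint S) := by
    intro x y hxy
    have h1' : adjoint Sinv ∘L adjoint S = 1 := by
      rw [← adjoint_comp, h1]; exact adjoint_id
    have hx := congrArg (fun T : H →L[ℂ] H => T x) h1'
    have hy := congrArg (fun T : H →L[ℂ] H => T y) h1'
    simp only [coe_comp', Function.comp_apply, one_apply] at hx hy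
    calc x = adjoint Sinv (adjoint S x) := hx.symm
    _ = adjoint Sinv (adjoint S y) := by rw [hxy]
    _ = y := hy
  have hCinj : Function.Injective C := fun x y h => by
    rw [← hCC x, ← hCC y, h]
  constructor
  · intro hn x
    have hn' : ∀ y, adjoint S (S y) = S (adjoint S y) := fun y => by
      have := congrArg (fun T : H →L[ℂ] H => T y) hn
      simpa using this
    calc C (S (adjoint S (C (adjoint S x))))
        = C (P (P (C (adjoint S x)))) := by rw [hPP]
      _ = C (P (C (C (P (C (adjoint S x)))))) := by rw [hCC]
      _ = C (P (C (adjoint S (C (P (C x)))))) := by rw [hcomm]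
      _ = adjoint S (C (P (C (C (P (C x)))))) := by rw [← hcomm]
      _ = adjoint S (C (P (P (C x)))) := by rw [hCC]
      _ = adjoint S (C (S (adjoint S (C x)))) := by rw [hPP]
      _ = adjoint S (C (adjoint S (S (C x)))) := by rw [hn']
  · intro h
    ext x
    simp only [coe_comp', Function.comp_apply]
    have h0 := h (C x)
    have lhs : C (S (adjoint S (C (adjoint S (C x)))))
        = adjoint S (C (S (adjoint S x))) := by
      calc C (S (adjoint S (C (adjoint S (C x)))))
          = C (P (P (C (adjoint S (C x))))) := by rw [hPP]
        _ = C (P (C (C (P (C (adjoint S (C x))))))) := by rw [hCC]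
        _ = C (P (C (adjoint S (C (P (C (C x))))))) := by rw [hcomm]
        _ = adjoint S (C (P (C (C (P (C (C x))))))) := by rw [← hcomm]
        _ = adjoint S (C (P (P (C (C x))))) := by rw [hCC]
        _ = adjoint S (C (P (P x))) := by rw [hCC]
        _ = adjoint S (C (S (adjoint S x))) := by rw [hPP]
    rw [lhs, hCC] at h0
    exact (hCinj (hSinj h0)).symm
end
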